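/- The pairwise marginals p(t, a, b) = αᵗ(b)·βᵗ⁺¹(a)·exp(s(t,a,b))/Z of the chain CRF form, for each t, a probability distribution on K × K: all values are nonnegative and Σ_{a,b} p(t, a, b) = 1. -/

import Mathlib

open Finset in
private theorem crf_alpha_last {K : Type*} [Fintype K] :
    ∀ (n : ℕ) (w : Fin n → K → K → ℝ) (a : Fin (n + 1) → K → ℝ),
      (∀ y : K, a 0 y = 1) →
      (∀ (u : Fin n) (y : K),
        a u.succ y = ∑ y' : K, a u.castSucc y' * Real.exp (w u y y')) →
      ∀ y : K, a (Fin.last n) y = ∑ f : Fin n → K,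
        Real.exp (∑ u : Fin n,
          w u ((Fin.snoc f y : Fin (n + 1) → K) u.succ)
            ((Fin.snoc f y : Fin (n + 1) → K) u.castSucc)) := by
  intro n
  induction n with
  | zero =>
    intro w a h0 h y
    simp [h0, Fin.last]
  | succ n ih =>
    intro w a h0 h y
    have h0' : ∀ y : K, a (0 : Fin (n + 1)).castSucc y = 1 := by
      intro y; simpa using h0 y
    have h' : ∀ (u : Fin n) (y : K),
        a u.succ.castSucc y =
          ∑ y' : K, a u.castSucc.castSucc y' * Real.exp (w u.castSucc y y') := by
      intro u y
      rw [← Fin.succ_castSucc]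
      exact h u.castSucc y
    have key : ∀ z : K, a (Fin.last n).castSucc z =
        ∑ f : Fin n → K, Real.exp (∑ u : Fin n,
          w u.castSucc ((Fin.snoc f z : Fin (n + 1) → K) u.succ)
            ((Fin.snoc f z : Fin (n + 1) → K) u.castSucc)) :=
      ih (fun u => w u.castSucc) (fun u => a u.castSucc) h0' h'
    have hlast : a (Fin.last (n + 1)) y =
        ∑ y' : K, a (Fin.last n).castSucc y' * Real.exp (w (Fin.last n) y y') := by
      rw [← Fin.succ_last]
      exact h (Fin.last n) y
    rw [hlast]
    rw [← Equiv.sum_comp (Fin.snocEquiv (fun _ : Fin (n + 1) => K))]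
    rw [Fintype.sum_prod_type]
    rw [Finset.sum_congr rfl (fun y' _ => by rw [key y'])]
    refine Finset.sum_congr rfl fun y' _ => ?_
    rw [Finset.sum_mul]
    refine Finset.sum_congr rfl fun f _ => ?_
    rw [← Real.exp_add]
    congr 1
    rw [Fin.sum_univ_castSucc]
    congr 1
    · refine Finset.sum_congr rfl fun u _ => ?_
      simp [Fin.snocEquiv, -Fin.castSucc_succ, Fin.succ_castSucc, Fin.snoc_castSucc]
    · simp [Fin.snocEquiv, Fin.succ_last, Fin.snoc_last, Fin.snoc_castSucc]

/-- For each `t`, the forward–backward pairwise marginals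
`p t a b = α t b · β (t+1) a · exp(s t a b) / Z` form a probability
distribution on `K × K`: all values are nonnegative and they sum to 1. -/
theorem pairwise_marginals_form_distribution
    {K : Type*} [Fintype K] [DecidableEq K] [Nonempty K] (T : ℕ)
    (s : Fin T → K → K → ℝ)
    (α : Fin (T + 1) → K → ℝ)
    (hα0 : ∀ y : K, α 0 y = 1)
    (hα : ∀ (u : Fin T) (y : K),
      α u.succ y = ∑ y' : K, α u.castSucc y' * Real.exp (s u y y'))
    (β : Fin (T + 1) → K → ℝ)
    (hβT : ∀ y : K, β (Fin.last T) y = 1)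
    (hβ : ∀ (u : Fin T) (y' : K),
      β u.castSucc y' = ∑ y : K, β u.succ y * Real.exp (s u y y'))
    (Z : ℝ)
    (hZ : Z = ∑ y : Fin (T + 1) → K,
        Real.exp (∑ u : Fin T, s u (y u.succ) (y u.castSucc)))
    (p : Fin T → K → K → ℝ)
    (hp : ∀ (t : Fin T) (a b : K),
      p t a b = α t.castSucc b * β t.succ a * Real.exp (s t a b) / Z) :
    ∀ t : Fin T, (∀ a b : K, 0 ≤ p t a b) ∧ (∑ a : K, ∑ b : K, p t a b) = 1 := by
  -- Z is positive
  have hZpos : 0 < Z := by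
    rw [hZ]
    exact Finset.sum_pos (fun f _ => Real.exp_pos _) ⟨Classical.arbitrary _, Finset.mem_univ _⟩
  -- α nonneg
  have hαnn : ∀ (u : Fin (T + 1)) (y : K), 0 ≤ α u y := by
    intro u
    induction u using Fin.induction with
    | zero => intro y; rw [hα0]; norm_num
    | succ u ihu =>
      intro y
      rw [hα]
      exact Finset.sum_nonneg fun y' _ =>
        mul_nonneg (ihu y') (Real.exp_pos _).le
  -- β nonneg
  have hβnn : ∀ (u : Fin (T + 1)) (y : K), 0 ≤ β u y := by
    intro u
    induction u using Fin.reverseInduction with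
    | last => intro y; rw [hβT]; norm_num
    | cast u ihu =>
      intro y
      rw [hβ]
      exact Finset.sum_nonneg fun y' _ =>
        mul_nonneg (ihu y') (Real.exp_pos _).le
  -- sum α(last) = Z
  have hsum_last : (∑ y : K, α (Fin.last T) y) = Z := by
    rw [hZ]
    rw [Finset.sum_congr rfl (fun y _ => crf_alpha_last T s α hα0 hα y)]
    rw [← Equiv.sum_comp (Fin.snocEquiv (fun _ : Fin (T + 1) => K))
      (fun g => Real.exp (∑ u : Fin T, s u (g u.succ) (g u.castSucc))),
      Fintype.sum_prod_type]
    simp only [Fin.snocEquiv_apply]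
  -- S u := ∑ y, α u y * β u y is constantly Z
  have hS : ∀ u : Fin (T + 1), (∑ y : K, α u y * β u y) = Z := by
    intro u
    induction u using Fin.reverseInduction with
    | last => simpa [hβT] using hsum_last
    | cast u ihu =>
      rw [← ihu]
      calc (∑ y' : K, α u.castSucc y' * β u.castSucc y')
          = ∑ y' : K, ∑ y : K, α u.castSucc y' * Real.exp (s u y y') * β u.succ y := by
            refine Finset.sum_congr rfl fun y' _ => ?_
            rw [hβ, Finset.mul_sum]
            refine Finset.sum_congr rfl fun y _ => ?_
            ring
        _ = ∑ y : K, ∑ y' : K, α u.castSucc y' * Real.exp (s u y y') * β u.succ y := by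
            rw [Finset.sum_comm]
        _ = ∑ y : K, α u.succ y * β u.succ y := by
            refine Finset.sum_congr rfl fun y _ => ?_
            rw [hα, Finset.sum_mul]
  intro t
  refine ⟨fun a b => ?_, ?_⟩
  · rw [hp]
    exact div_nonneg
      (mul_nonneg (mul_nonneg (hαnn _ b) (hβnn _ a)) (Real.exp_pos _).le) hZpos.le
  · have : (∑ a : K, ∑ b : K, p t a b) =
        (∑ a : K, α t.succ a * β t.succ a) / Z := by
      rw [Finset.sum_div]
      refine Finset.sum_congr rfl fun a _ => ?_
      rw [hα, Finset.sum_mul, Finset.sum_div]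
      refine Finset.sum_congr rfl fun b _ => ?_
      rw [hp]
      ring_nf
    rw [this, hS, div_self hZpos.ne']
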